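/- In the regular heptagon K = conv{k_i : i = 0,…,6} with k_i = Rot_{2πi/7}(1,0), the segment from p₁ = k₀ to p₄ = ½(k₃ + k₄) is an affine diameter of K (no parallel chord is longer), and its length is 1 + cos(π/7). -/

import Mathlib

open Real

/-- The vertices of the regular heptagon: `k i = Rot_{2πi/7}(1, 0)`. -/
noncomputable def heptVtx (i : ℕ) : EuclideanSpace ℝ (Fin 2) :=
  (WithLp.equiv 2 (Fin 2 → ℝ)).symm ![Real.cos (2 * π * i / 7), Real.sin (2 * π * i / 7)]

/-- The regular heptagon. -/
noncomputable def heptagon : Set (EuclideanSpace ℝ (Fin 2)) :=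
  convexHull ℝ
    {heptVtx 0, heptVtx 1, heptVtx 2, heptVtx 3, heptVtx 4, heptVtx 5, heptVtx 6}

lemma heptVtx_apply_zero (i : ℕ) : heptVtx i 0 = Real.cos (2 * π * i / 7) := rfl
lemma heptVtx_apply_one (i : ℕ) : heptVtx i 1 = Real.sin (2 * π * i / 7) := rfl

lemma pi7_pos : (0:ℝ) < π/7 := by positivity

lemma cos_pi7_nonneg : 0 ≤ Real.cos (π/7) := by
  apply Real.cos_nonneg_of_mem_Icc
  constructor <;> [linarith [Real.pi_pos]; linarith [Real.pi_pos]]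

lemma hept_coord_bounds (i : ℕ) (hi : i ≤ 6) :
    -Real.cos (π/7) ≤ heptVtx i 0 ∧ heptVtx i 0 ≤ 1 := by
  rw [heptVtx_apply_zero]
  refine ⟨?_, Real.cos_le_one _⟩
  have hc23 : Real.cos (3*π/7) ≤ Real.cos (π/7) :=
    Real.cos_le_cos_of_nonneg_of_le_pi (by positivity) (by linarith [Real.pi_pos])
      (by linarith [Real.pi_pos])
  have h2 : -Real.cos (π/7) ≤ Real.cos (2*π*2/7) := by
    rw [show (2*π*2/7 : ℝ) = π - 3*π/7 by ring, Real.cos_pi_sub]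
    linarith
  have h1 : -Real.cos (π/7) ≤ Real.cos (2*π*1/7) := by
    have : 0 ≤ Real.cos (2*π*1/7) := by
      apply Real.cos_nonneg_of_mem_Icc
      constructor <;> nlinarith [Real.pi_pos]
    linarith [cos_pi7_nonneg]
  interval_cases i
  · simp only [Nat.cast_zero, mul_zero, zero_div, Real.cos_zero]
    linarith [cos_pi7_nonneg]
  · exact_mod_cast h1
  · exact_mod_cast h2
  · push_cast
    rw [show (2*π*3/7 : ℝ) = π - π/7 by ring, Real.cos_pi_sub]
  · push_cast
    rw [show (2*π*4/7 : ℝ) = 2*π - (π - π/7) by ring, Real.cos_two_pi_sub, Real.cos_pi_sub]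
  · push_cast
    rw [show (2*π*5/7 : ℝ) = 2*π - 2*π*2/7 by ring, Real.cos_two_pi_sub]
    exact h2
  · push_cast
    rw [show (2*π*6/7 : ℝ) = 2*π - 2*π*1/7 by ring, Real.cos_two_pi_sub]
    exact h1

lemma hept_mem_bounds : ∀ x ∈ heptagon, -Real.cos (π/7) ≤ x 0 ∧ x 0 ≤ 1 := by
  have hlin : IsLinearMap ℝ (fun x : EuclideanSpace ℝ (Fin 2) => x 0) :=
    ⟨fun a b => rfl, fun c a => rfl⟩
  have hconv : Convex ℝ ({x : EuclideanSpace ℝ (Fin 2) | -Real.cos (π/7) ≤ x 0} ∩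
      {x : EuclideanSpace ℝ (Fin 2) | x 0 ≤ 1}) :=
    (convex_halfSpace_ge hlin (-Real.cos (π/7))).inter (convex_halfSpace_le hlin 1)
  intro x hx
  have hsub := convexHull_min (s := {heptVtx 0, heptVtx 1, heptVtx 2, heptVtx 3, heptVtx 4,
      heptVtx 5, heptVtx 6}) ?_ hconv
  · exact hsub hx
  · intro y hy
    simp only [Set.mem_insert_iff, Set.mem_singleton_iff] at hy
    rcases hy with h|h|h|h|h|h|h <;> subst h <;>
      exact hept_coord_bounds _ (by norm_num)

lemma hept_v_zero :
    ((1 / 2 : ℝ) • (heptVtx 3 + heptVtx 4) - heptVtx 0) 0 = -(1 + Real.cos (π/7)) := by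
  show (1/2 : ℝ) * (heptVtx 3 0 + heptVtx 4 0) - heptVtx 0 0 = _
  rw [heptVtx_apply_zero, heptVtx_apply_zero, heptVtx_apply_zero]
  push_cast
  rw [show (2*π*3/7 : ℝ) = π - π/7 by ring,
      show (2*π*4/7 : ℝ) = 2*π - (π - π/7) by ring,
      Real.cos_two_pi_sub, Real.cos_pi_sub]
  norm_num
  ring

lemma hept_v_one :
    ((1 / 2 : ℝ) • (heptVtx 3 + heptVtx 4) - heptVtx 0) 1 = 0 := by
  show (1/2 : ℝ) * (heptVtx 3 1 + heptVtx 4 1) - heptVtx 0 1 = 0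
  rw [heptVtx_apply_one, heptVtx_apply_one, heptVtx_apply_one]
  push_cast
  rw [show (2*π*3/7 : ℝ) = π - π/7 by ring,
      show (2*π*4/7 : ℝ) = 2*π - (π - π/7) by ring,
      Real.sin_two_pi_sub, Real.sin_pi_sub]
  norm_num

lemma hept_v_norm :
    ‖(1 / 2 : ℝ) • (heptVtx 3 + heptVtx 4) - heptVtx 0‖ = 1 + Real.cos (π/7) := by
  rw [EuclideanSpace.norm_eq]
  simp only [Fin.sum_univ_two, hept_v_zero, hept_v_one, Real.norm_eq_abs, sq_abs]
  rw [show (-(1 + Real.cos (π/7)))^2 + 0^2 = (1 + Real.cos (π/7))^2 by ring]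
  exact Real.sqrt_sq (by linarith [cos_pi7_nonneg])

/-- In the regular heptagon, the segment from `p₁ = k₀` to `p₄ = ½(k₃ + k₄)` is an affine
diameter (no parallel chord is longer), and its length is `1 + cos(π/7)`. -/
theorem heptagon_affine_diameter :
    (∀ a ∈ heptagon, ∀ b ∈ heptagon,
      (∃ t : ℝ, b - a = t • ((1 / 2 : ℝ) • (heptVtx 3 + heptVtx 4) - heptVtx 0)) →
      ‖b - a‖ ≤ ‖(1 / 2 : ℝ) • (heptVtx 3 + heptVtx 4) - heptVtx 0‖) ∧
    ‖(1 / 2 : ℝ) • (heptVtx 3 + heptVtx 4) - heptVtx 0‖ = 1 + Real.cos (π / 7) := by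
  refine ⟨?_, hept_v_norm⟩
  intro a ha b hb ⟨t, ht⟩
  have hab := hept_mem_bounds a ha
  have hbb := hept_mem_bounds b hb
  have hc := cos_pi7_nonneg
  have hcoord : (b - a) 0 = t * (-(1 + Real.cos (π/7))) := by
    have : (b - a) 0 = (t • ((1 / 2 : ℝ) • (heptVtx 3 + heptVtx 4) - heptVtx 0)) 0 := by
      rw [ht]
    rw [this]; show t * _ = _; exact congrArg (t * ·) hept_v_zero
  have hsub : (b - a) 0 = b 0 - a 0 := rfl
  have habs : |t| * (1 + Real.cos (π/7)) ≤ 1 + Real.cos (π/7) := by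
    have h1 : |b 0 - a 0| ≤ 1 + Real.cos (π/7) := by
      rw [abs_le]; constructor <;> linarith [hab.1, hab.2, hbb.1, hbb.2]
    have h2 : |b 0 - a 0| = |t| * (1 + Real.cos (π/7)) := by
      rw [← hsub, hcoord, abs_mul, abs_neg, abs_of_nonneg (by linarith : (0:ℝ) ≤ 1 + Real.cos (π/7))]
    linarith [h2 ▸ h1]
  rw [ht, norm_smul, hept_v_norm, Real.norm_eq_abs]
  exact habs
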